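/- Let μ = √(√5 − 2) and α = ((μ,0),(−μ,0)) ∈ 𝓕₂(B₁(0)). Then α is a critical point of the disc 2-vortex Hamiltonian 𝓗 and the kernel of its Hessian ∇²𝓗(α) ∈ ℝ^{4×4} is exactly one-dimensional, spanned by J₂α = (0,−μ,0,μ). In particular α satisfies condition (A1′)(ii): the domain and g are rotationally invariant and dim ker ∇²𝓗(α) = 1. -/

import Mathlib

noncomputable section

open Real

/-- The plane `ℝ²` with its Euclidean structure. -/
abbrev R2 : Type := EuclideanSpace ℝ (Fin 2)

/-- The standard symplectic matrix `J` (rotation by `-π/2`): `J(x₁,x₂) = (x₂,-x₁)`. -/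
def Jrot (x : R2) : R2 := (WithLp.equiv 2 (Fin 2 → ℝ)).symm ![x 1, -(x 0)]

/-- The rotation `e^{θJ}` of the plane. -/
def rotate (θ : ℝ) (x : R2) : R2 :=
  (WithLp.equiv 2 (Fin 2 → ℝ)).symm
    ![Real.cos θ * x 0 + Real.sin θ * x 1, -Real.sin θ * x 0 + Real.cos θ * x 1]

/-- The point `(x₁,x₂) ∈ ℝ²`. -/
def vec (x₁ x₂ : ℝ) : R2 := (WithLp.equiv 2 (Fin 2 → ℝ)).symm ![x₁, x₂]

/-- The regular part of the Dirichlet Green's function of the unit disc. -/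
def discg (x y : R2) : ℝ :=
  -(1 / (4 * π)) * Real.log (‖x‖ ^ 2 * ‖y‖ ^ 2 - 2 * (inner ℝ x y : ℝ) + 1)

/-- The disc `2`-vortex Hamiltonian `𝓗` with vorticities `Γ¹ = 1`, `Γ² = -1`. -/
def discHam (x y : R2) : ℝ :=
  (1 / π) * (Real.log ‖x - y‖
      - 1 / 2 * Real.log (‖x‖ ^ 2 * ‖y‖ ^ 2 - 2 * (inner ℝ x y : ℝ) + 1))
    + 1 / (2 * π) * (Real.log (1 - ‖x‖ ^ 2) + Real.log (1 - ‖y‖ ^ 2))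

/-- The disc `2`-vortex Hamiltonian as a function on `(ℝ²)²`. -/
def discHamV (a : Fin 2 → R2) : ℝ := discHam (a 0) (a 1)

/-- Partial gradient `∇_{zᵢ} f(z) ∈ ℝ²` of a function of several planar variables. -/
def pgrad {ι : Type*} [DecidableEq ι] (f : (ι → R2) → ℝ) (z : ι → R2) (i : ι) : R2 :=
  gradient (fun p => f (Function.update z i p)) (z i)

/-- Kernel of the Hessian `∇²f(z)` viewed as a map into the dual space. -/
def hessKer {ι : Type*} [Fintype ι] (f : (ι → R2) → ℝ) (z : ι → R2) :
    Submodule ℝ (ι → R2) :=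
  LinearMap.ker ((fderiv ℝ (fderiv ℝ f) z : (ι → R2) →ₗ[ℝ] (ι → R2) →L[ℝ] ℝ))

/-- Reflection at the unit circle, `R(y) = y/|y|²`. -/
def Rmap (y : R2) : R2 := (‖y‖ ^ 2)⁻¹ • y


abbrev EE : Type := Fin 2 → R2

def p0 : EE →L[ℝ] R2 := ContinuousLinearMap.proj 0
def p1 : EE →L[ℝ] R2 := ContinuousLinearMap.proj 1
def dl : EE →L[ℝ] R2 := p0 - p1

def fU (a : EE) : ℝ := inner ℝ (a 0) (a 0)
def fV (a : EE) : ℝ := inner ℝ (a 1) (a 1)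
def fP (a : EE) : ℝ := inner ℝ (a 0) (a 1)
def fS (a : EE) : ℝ := inner ℝ (a 0 - a 1) (a 0 - a 1)
def fQ (a : EE) : ℝ := fU a * fV a - 2 * fP a + 1

def dU (a : EE) : EE →L[ℝ] ℝ := (fderivInnerCLM ℝ (a 0, a 0)).comp (p0.prod p0)
def dV (a : EE) : EE →L[ℝ] ℝ := (fderivInnerCLM ℝ (a 1, a 1)).comp (p1.prod p1)
def dP (a : EE) : EE →L[ℝ] ℝ := (fderivInnerCLM ℝ (a 0, a 1)).comp (p0.prod p1)
def dS (a : EE) : EE →L[ℝ] ℝ := (fderivInnerCLM ℝ (a 0 - a 1, a 0 - a 1)).comp (dl.prod dl)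
def dQ (a : EE) : EE →L[ℝ] ℝ := (fU a • dV a + fV a • dU a) - (2:ℝ) • dP a

lemma hasU (a : EE) : HasFDerivAt fU (dU a) a :=
  HasFDerivAt.inner (𝕜 := ℝ) (f := fun a : EE => a 0) (g := fun a : EE => a 0) p0.hasFDerivAt p0.hasFDerivAt

lemma hasV (a : EE) : HasFDerivAt fV (dV a) a :=
  HasFDerivAt.inner (𝕜 := ℝ) (f := fun a : EE => a 1) (g := fun a : EE => a 1) p1.hasFDerivAt p1.hasFDerivAt

lemma hasP (a : EE) : HasFDerivAt fP (dP a) a :=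
  HasFDerivAt.inner (𝕜 := ℝ) (f := fun a : EE => a 0) (g := fun a : EE => a 1) p0.hasFDerivAt p1.hasFDerivAt

lemma hasS (a : EE) : HasFDerivAt fS (dS a) a :=
  HasFDerivAt.inner (𝕜 := ℝ) (f := fun a : EE => a 0 - a 1) (g := fun a : EE => a 0 - a 1)
    (p0.hasFDerivAt.sub p1.hasFDerivAt) (p0.hasFDerivAt.sub p1.hasFDerivAt)

lemma hasQ (a : EE) : HasFDerivAt fQ (dQ a) a :=
  (((hasU a).mul (hasV a)).sub (((hasP a).const_mul 2))).add_const 1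

def Ffun (a : EE) : ℝ :=
  (1 / (2 * π)) * (Real.log (fS a) - Real.log (fQ a)
    + (Real.log (1 - fU a) + Real.log (1 - fV a)))

def Gfun (a : EE) : EE →L[ℝ] ℝ :=
  (1 / (2 * π)) • ((fS a)⁻¹ • dS a - (fQ a)⁻¹ • dQ a
    + ((1 - fU a)⁻¹ • -dU a + (1 - fV a)⁻¹ • -dV a))

lemma hasF (a : EE) (h1 : fS a ≠ 0) (h2 : fQ a ≠ 0) (h3 : 1 - fU a ≠ 0) (h4 : 1 - fV a ≠ 0) :
    HasFDerivAt Ffun (Gfun a) a := by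
  have l1 : HasFDerivAt (fun a => Real.log (fS a)) ((fS a)⁻¹ • dS a) a :=
    (Real.hasDerivAt_log h1).comp_hasFDerivAt a (hasS a)
  have l2 : HasFDerivAt (fun a => Real.log (fQ a)) ((fQ a)⁻¹ • dQ a) a :=
    (Real.hasDerivAt_log h2).comp_hasFDerivAt a (hasQ a)
  have l3 : HasFDerivAt (fun a => Real.log (1 - fU a)) ((1 - fU a)⁻¹ • -dU a) a :=
    by have := (Real.hasDerivAt_log h3).comp_hasFDerivAt a ((hasU a).const_sub (1:ℝ)); exact this
  have l4 : HasFDerivAt (fun a => Real.log (1 - fV a)) ((1 - fV a)⁻¹ • -dV a) a :=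
    by have := (Real.hasDerivAt_log h4).comp_hasFDerivAt a ((hasV a).const_sub (1:ℝ)); exact this
  exact ((l1.sub l2).add (l3.add l4)).const_mul (1 / (2 * π))

lemma discHam_eq (x y : R2) : discHam x y =
    (1 / (2 * π)) * (Real.log (inner ℝ (x - y) (x - y) : ℝ)
      - Real.log ((inner ℝ x x : ℝ) * (inner ℝ y y : ℝ) - 2 * (inner ℝ x y : ℝ) + 1)
      + (Real.log (1 - (inner ℝ x x : ℝ)) + Real.log (1 - (inner ℝ y y : ℝ)))) := by
  have h : ∀ z : R2, (inner ℝ z z : ℝ) = ‖z‖ ^ 2 := fun z => real_inner_self_eq_norm_sq z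
  rw [discHam, h, h, h]
  have : Real.log (‖x - y‖ ^ 2) = 2 * Real.log ‖x - y‖ := by
    rw [Real.log_pow]; push_cast; ring
  rw [this]; ring

lemma discHamV_eq : discHamV = Ffun := by
  funext a
  rw [discHamV, discHam_eq, Ffun]
  rfl
def D2 : (R2 × R2) →L[ℝ] (R2 × R2) →L[ℝ] ℝ :=
  (isBoundedBilinearMap_inner (𝕜 := ℝ) (E := R2)).toContinuousLinearMap.deriv₂

lemma D2_eq (p : R2 × R2) : D2 p = fderivInnerCLM ℝ p := rfl

def BB (A B : EE →L[ℝ] R2) : EE →L[ℝ] EE →L[ℝ] ℝ :=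
  ((ContinuousLinearMap.compL ℝ EE (R2 × R2) ℝ).flip (A.prod B)).comp (D2.comp (A.prod B))

lemma BB_apply (A B : EE →L[ℝ] R2) (a : EE) :
    BB A B a = (fderivInnerCLM ℝ (A a, B a)).comp (A.prod B) := rfl

lemma dU_eq : dU = ⇑(BB p0 p0) := rfl
lemma dV_eq : dV = ⇑(BB p1 p1) := rfl
lemma dP_eq : dP = ⇑(BB p0 p1) := rfl

lemma dS_eq : dS = ⇑(BB dl dl) := by
  funext a
  rw [dS, BB_apply]
  rfl

lemma hasdU (a : EE) : HasFDerivAt dU (BB p0 p0) a := by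
  rw [dU_eq]; exact (BB p0 p0).hasFDerivAt
lemma hasdV (a : EE) : HasFDerivAt dV (BB p1 p1) a := by
  rw [dV_eq]; exact (BB p1 p1).hasFDerivAt
lemma hasdP (a : EE) : HasFDerivAt dP (BB p0 p1) a := by
  rw [dP_eq]; exact (BB p0 p1).hasFDerivAt
lemma hasdS (a : EE) : HasFDerivAt dS (BB dl dl) a := by
  rw [dS_eq]; exact (BB dl dl).hasFDerivAt

lemma hasdQ (a : EE) : HasFDerivAt dQ
    (((fU a • BB p1 p1 + (dU a).smulRight (dV a)) + (fV a • BB p0 p0 + (dV a).smulRight (dU a)))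
      - (2:ℝ) • BB p0 p1) a :=
  (((hasU a).smul (hasdV a)).add ((hasV a).smul (hasdU a))).sub ((hasdP a).const_smul (2:ℝ))

def BIG (a : EE) : EE →L[ℝ] (EE →L[ℝ] ℝ) :=
  (1 / (2 * π)) • (
    (((fS a)⁻¹ • BB dl dl + ((-(fS a ^ 2)⁻¹) • dS a).smulRight (dS a))
      - ((fQ a)⁻¹ • (((fU a • BB p1 p1 + (dU a).smulRight (dV a))
            + (fV a • BB p0 p0 + (dV a).smulRight (dU a))) - (2:ℝ) • BB p0 p1)
          + ((-(fQ a ^ 2)⁻¹) • dQ a).smulRight (dQ a)))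
    + (((1 - fU a)⁻¹ • -(BB p0 p0) + ((-((1 - fU a) ^ 2)⁻¹) • -dU a).smulRight (-dU a))
      + ((1 - fV a)⁻¹ • -(BB p1 p1) + ((-((1 - fV a) ^ 2)⁻¹) • -dV a).smulRight (-dV a))))

lemma hasG (a : EE) (h1 : fS a ≠ 0) (h2 : fQ a ≠ 0) (h3 : 1 - fU a ≠ 0) (h4 : 1 - fV a ≠ 0) :
    HasFDerivAt Gfun (BIG a) a := by
  have hinvS : HasFDerivAt (fun a => (fS a)⁻¹) ((-(fS a ^ 2)⁻¹) • dS a) a :=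
    (hasDerivAt_inv h1).comp_hasFDerivAt a (hasS a)
  have hinvQ : HasFDerivAt (fun a => (fQ a)⁻¹) ((-(fQ a ^ 2)⁻¹) • dQ a) a :=
    (hasDerivAt_inv h2).comp_hasFDerivAt a (hasQ a)
  have hinvU : HasFDerivAt (fun a => (1 - fU a)⁻¹) ((-((1 - fU a) ^ 2)⁻¹) • -dU a) a :=
    (hasDerivAt_inv h3).comp_hasFDerivAt a ((hasU a).const_sub 1)
  have hinvV : HasFDerivAt (fun a => (1 - fV a)⁻¹) ((-((1 - fV a) ^ 2)⁻¹) • -dV a) a :=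
    (hasDerivAt_inv h4).comp_hasFDerivAt a ((hasV a).const_sub 1)
  have hT1 := hinvS.smul (hasdS a)
  have hT2 := hinvQ.smul (hasdQ a)
  have hT3 := hinvU.smul ((hasdU a).neg)
  have hT4 := hinvV.smul ((hasdV a).neg)
  exact ((hT1.sub hT2).add (hT3.add hT4)).const_smul (1 / (2 * π))
lemma contU : Continuous fU := (continuous_apply 0).inner (continuous_apply 0)
lemma contV : Continuous fV := (continuous_apply 1).inner (continuous_apply 1)
lemma contP : Continuous fP := (continuous_apply 0).inner (continuous_apply 1)
lemma contS : Continuous fS :=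
  ((continuous_apply 0).sub (continuous_apply 1)).inner ((continuous_apply 0).sub (continuous_apply 1))
lemma contQ : Continuous fQ := ((contU.mul contV).sub (continuous_const.mul contP)).add continuous_const

lemma second_fderiv (a : EE) (h1 : fS a ≠ 0) (h2 : fQ a ≠ 0) (h3 : 1 - fU a ≠ 0)
    (h4 : 1 - fV a ≠ 0) : fderiv ℝ (fderiv ℝ Ffun) a = BIG a := by
  have hO : IsOpen {b : EE | fS b ≠ 0 ∧ fQ b ≠ 0 ∧ (1 - fU b) ≠ 0 ∧ (1 - fV b) ≠ 0} := by
    refine (isOpen_compl_singleton.preimage contS).inter <|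
      (isOpen_compl_singleton.preimage contQ).inter <|
      ((isOpen_compl_singleton.preimage (continuous_const.sub contU)).inter
        (isOpen_compl_singleton.preimage (continuous_const.sub contV)))
  have hev : fderiv ℝ Ffun =ᶠ[nhds a] Gfun := by
    filter_upwards [hO.mem_nhds ⟨h1, h2, h3, h4⟩] with b hb
    exact (hasF b hb.1 hb.2.1 hb.2.2.1 hb.2.2.2).fderiv
  rw [hev.fderiv_eq, (hasG a h1 h2 h3 h4).fderiv]
section KEY

variable (μ : ℝ)

local notation "AL" => (![vec μ 0, vec (-μ) 0] : EE)

lemma alpha0 : (![vec μ 0, vec (-μ) 0] : EE) 0 = vec μ 0 := rfl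
lemma alpha1 : (![vec μ 0, vec (-μ) 0] : EE) 1 = vec (-μ) 0 := rfl

lemma fU_a : fU AL = μ^2 := by
  simp [fU, vec, PiLp.inner_apply, Fin.sum_univ_two, WithLp.equiv_symm_apply, PiLp.toLp_apply,
    RCLike.inner_apply, conj_trivial, EuclideanSpace.real_norm_sq_eq]

lemma fV_a : fV AL = μ^2 := by
  simp [fV, vec, PiLp.inner_apply, Fin.sum_univ_two, WithLp.equiv_symm_apply, PiLp.toLp_apply,
    RCLike.inner_apply, conj_trivial, EuclideanSpace.real_norm_sq_eq]

lemma fS_a : fS AL = 4*μ^2 := by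
  simp [fS, vec, PiLp.inner_apply, Fin.sum_univ_two, WithLp.equiv_symm_apply, PiLp.toLp_apply,
    RCLike.inner_apply, conj_trivial, PiLp.sub_apply, EuclideanSpace.real_norm_sq_eq]
  ring

lemma fQ_a : fQ AL = (1+μ^2)^2 := by
  simp [fQ, fU, fV, fP, vec, PiLp.inner_apply, Fin.sum_univ_two, WithLp.equiv_symm_apply, PiLp.toLp_apply,
    RCLike.inner_apply, conj_trivial, EuclideanSpace.real_norm_sq_eq]
  ring

set_option maxHeartbeats 2000000 in
set_option synthInstance.maxHeartbeats 400000 in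
lemma key (hμ : μ ≠ 0) (hm : (1:ℝ) - μ^2 ≠ 0) (z w : EE) :
    BIG AL z w = (1/(2*π)) * (
      (1/(2*μ^2)) * ((z 0 0 - z 1 0)*(w 0 0 - w 1 0) + (z 0 1 - z 1 1)*(w 0 1 - w 1 1))
      - (1/μ^2) * ((z 0 0 - z 1 0)*(w 0 0 - w 1 0))
      - (1/(1+μ^2)^2) * (2*μ^2*(z 0 0*w 0 0 + z 0 1*w 0 1 + z 1 0*w 1 0 + z 1 1*w 1 1)
          - 4*μ^2*(z 0 0*w 1 0 + z 1 0*w 0 0)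
          - 2*(z 0 0*w 1 0 + z 0 1*w 1 1 + z 1 0*w 0 0 + z 1 1*w 0 1))
      + (4*μ^2/(1+μ^2)^2) * ((z 0 0 - z 1 0)*(w 0 0 - w 1 0))
      - (2/(1-μ^2)) * (z 0 0*w 0 0 + z 0 1*w 0 1 + z 1 0*w 1 0 + z 1 1*w 1 1)
      - (4*μ^2/(1-μ^2)^2) * (z 0 0*w 0 0 + z 1 0*w 1 0)) := by
  have h1 : (1:ℝ) + μ^2 ≠ 0 := by positivity
  have hπ : (π : ℝ) ≠ 0 := Real.pi_ne_zero
  simp only [BIG, BB_apply, dS, dU, dV, dP, dQ, fU_a, fV_a, fS_a, fQ_a, p0, p1, dl,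
    ContinuousLinearMap.smul_apply, ContinuousLinearMap.add_apply,
    ContinuousLinearMap.sub_apply, ContinuousLinearMap.neg_apply,
    ContinuousLinearMap.comp_apply, ContinuousLinearMap.prod_apply,
    ContinuousLinearMap.smulRight_apply, ContinuousLinearMap.proj_apply,
    fderivInnerCLM_apply, smul_eq_mul]
  rw [show (![vec μ 0, vec (-μ) 0] : EE) 0 = vec μ 0 from rfl,
      show (![vec μ 0, vec (-μ) 0] : EE) 1 = vec (-μ) 0 from rfl]
  simp only [vec, PiLp.inner_apply, Fin.sum_univ_two, WithLp.equiv_symm_apply, PiLp.toLp_apply,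
    RCLike.inner_apply, conj_trivial, PiLp.sub_apply, Matrix.cons_val_zero, Matrix.cons_val_one,
    Matrix.head_cons]
  field_simp [hμ, hm, h1]
  ring

end KEY
section KEY2

variable (μ : ℝ)

set_option maxHeartbeats 1000000 in
lemma Gzero (hμ : μ ≠ 0) (hm : (1:ℝ) - μ^2 ≠ 0) (hμ4 : μ^4 = 1 - 4*μ^2) :
    Gfun (![vec μ 0, vec (-μ) 0] : EE) = 0 := by
  have h1 : (1:ℝ) + μ^2 ≠ 0 := by positivity
  ext w
  simp only [Gfun, dS, dU, dV, dP, dQ, fU_a, fV_a, fS_a, fQ_a, p0, p1, dl,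
    ContinuousLinearMap.smul_apply, ContinuousLinearMap.add_apply,
    ContinuousLinearMap.sub_apply, ContinuousLinearMap.neg_apply,
    ContinuousLinearMap.comp_apply, ContinuousLinearMap.prod_apply,
    ContinuousLinearMap.proj_apply, ContinuousLinearMap.zero_apply,
    fderivInnerCLM_apply, smul_eq_mul]
  rw [show (![vec μ 0, vec (-μ) 0] : EE) 0 = vec μ 0 from rfl,
      show (![vec μ 0, vec (-μ) 0] : EE) 1 = vec (-μ) 0 from rfl]
  simp only [vec, PiLp.inner_apply, Fin.sum_univ_two, WithLp.equiv_symm_apply, PiLp.toLp_apply,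
    RCLike.inner_apply, conj_trivial, PiLp.sub_apply, Matrix.cons_val_zero, Matrix.cons_val_one,
    Matrix.head_cons]
  field_simp [hμ, hm, h1]
  linear_combination (-(4*μ*(1+μ^2)*(w 0 0 - w 1 0))) * hμ4

end KEY2
section KEY3

variable (μ : ℝ) (hμ : μ ≠ 0) (hm : (1:ℝ) - μ^2 ≠ 0)

local notation "Av" => (![vec μ 0, vec (-μ) 0] : EE)
local notation "Vv" => (![vec 0 (-μ), vec 0 μ] : EE)

lemma comp_simp (x y : ℝ) : (![vec x y, vec 0 0] : EE) 0 0 = x ∧ (![vec x y, vec 0 0] : EE) 0 1 = y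
    ∧ (![vec x y, vec 0 0] : EE) 1 0 = 0 ∧ (![vec x y, vec 0 0] : EE) 1 1 = 0 := by
  refine ⟨rfl, rfl, rfl, rfl⟩

include hμ hm

lemma key00 (z : EE) : BIG Av z ![vec 1 0, vec 0 0] = (1/(2*π)) *
    ((-(1/(2*μ^2)) + 2*μ^2/(1+μ^2)^2 - 2/(1-μ^2) - 4*μ^2/(1-μ^2)^2) * z 0 0
      + (1/(2*μ^2) + 2/(1+μ^2)^2) * z 1 0) := by
  rw [key μ hμ hm]
  norm_num [vec]
  first
  | exact Or.inl trivial
  | exact Or.inl (by ring)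
  | ring

lemma key10 (z : EE) : BIG Av z ![vec 0 0, vec 1 0] = (1/(2*π)) *
    ((1/(2*μ^2) + 2/(1+μ^2)^2) * z 0 0
      + (-(1/(2*μ^2)) + 2*μ^2/(1+μ^2)^2 - 2/(1-μ^2) - 4*μ^2/(1-μ^2)^2) * z 1 0) := by
  rw [key μ hμ hm]
  norm_num [vec]
  first
  | exact Or.inl trivial
  | exact Or.inl (by ring)
  | ring

lemma key01 (z : EE) : BIG Av z ![vec 0 1, vec 0 0] = (1/(2*π)) *
    ((1/(2*μ^2) - 2*μ^2/(1+μ^2)^2 - 2/(1-μ^2)) * z 0 1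
      + (-(1/(2*μ^2)) + 2/(1+μ^2)^2) * z 1 1) := by
  rw [key μ hμ hm]
  norm_num [vec]
  first
  | exact Or.inl trivial
  | exact Or.inl (by ring)
  | ring

lemma key11 (z : EE) : BIG Av z ![vec 0 0, vec 0 1] = (1/(2*π)) *
    ((-(1/(2*μ^2)) + 2/(1+μ^2)^2) * z 0 1
      + (1/(2*μ^2) - 2*μ^2/(1+μ^2)^2 - 2/(1-μ^2)) * z 1 1) := by
  rw [key μ hμ hm]
  norm_num [vec]
  first
  | exact Or.inl trivial
  | exact Or.inl (by ring)
  | ring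

lemma vKer (hμ4 : μ^4 = 1 - 4*μ^2) : BIG Av Vv = 0 := by
  have h1 : (1:ℝ) + μ^2 ≠ 0 := by positivity
  ext w
  rw [key μ hμ hm]
  norm_num [vec]
  field_simp [hμ, hm, h1]
  linear_combination (2*(w 0 1 - w 1 1)*(1+μ^2)) * hμ4

end KEY3
section KER

variable (μ : ℝ)

set_option maxHeartbeats 1000000 in
lemma hess_alpha (hμ : μ ≠ 0) (hm : (1:ℝ) - μ^2 ≠ 0) :
    fderiv ℝ (fderiv ℝ Ffun) (![vec μ 0, vec (-μ) 0] : EE) = BIG ![vec μ 0, vec (-μ) 0] := by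
  refine second_fderiv _ ?_ ?_ ?_ ?_
  · rw [fS_a]; positivity
  · rw [fQ_a]; positivity
  · rw [fU_a]; exact hm
  · rw [fV_a]; exact hm

set_option maxHeartbeats 4000000 in
lemma ker_eq (hμ0 : 0 < μ) (h23 : 0.23 < μ^2) (h24 : μ^2 < 0.24)
    (hμ4 : μ^4 = 1 - 4*μ^2) :
    LinearMap.ker ((fderiv ℝ (fderiv ℝ Ffun) (![vec μ 0, vec (-μ) 0] : EE) : EE →ₗ[ℝ] EE →L[ℝ] ℝ))
      = Submodule.span ℝ {(![vec 0 (-μ), vec 0 μ] : EE)} := by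
  have hμ : μ ≠ 0 := ne_of_gt hμ0
  have hmpos : (0:ℝ) < 1 - μ^2 := by nlinarith
  have hm : (1:ℝ) - μ^2 ≠ 0 := ne_of_gt hmpos
  have h1p : (0:ℝ) < 1 + μ^2 := by positivity
  have h1 : (1:ℝ) + μ^2 ≠ 0 := ne_of_gt h1p
  have hπ : (0:ℝ) < 1/(2*π) := by positivity
  have hμsq : (0:ℝ) < μ^2 := by positivity
  ext z
  rw [LinearMap.mem_ker]
  constructor
  · intro hz
    have hz' : fderiv ℝ (fderiv ℝ Ffun) (![vec μ 0, vec (-μ) 0] : EE) z = 0 := hz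
    rw [hess_alpha μ hμ hm] at hz'
    have hv : ∀ w, BIG (![vec μ 0, vec (-μ) 0] : EE) z w = 0 := fun w => by
      rw [hz']; rfl
    -- the four scalar equations
    have e00 := hv ![vec 1 0, vec 0 0]
    have e10 := hv ![vec 0 0, vec 1 0]
    have e01 := hv ![vec 0 1, vec 0 0]
    have e11 := hv ![vec 0 0, vec 0 1]
    rw [key00 μ hμ hm z] at e00
    rw [key10 μ hμ hm z] at e10
    rw [key01 μ hμ hm z] at e01
    rw [key11 μ hμ hm z] at e11
    set A := (-(1/(2*μ^2)) + 2*μ^2/(1+μ^2)^2 - 2/(1-μ^2) - 4*μ^2/(1-μ^2)^2) with hA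
    set B := (1/(2*μ^2) + 2/(1+μ^2)^2) with hB
    set C := (1/(2*μ^2) - 2*μ^2/(1+μ^2)^2 - 2/(1-μ^2)) with hC
    set D := (-(1/(2*μ^2)) + 2/(1+μ^2)^2) with hD
    have ha00 : A * z 0 0 + B * z 1 0 = 0 := by
      rcases mul_eq_zero.mp e00 with h | h
      · exact absurd h (ne_of_gt hπ)
      · exact h
    have ha10 : B * z 0 0 + A * z 1 0 = 0 := by
      rcases mul_eq_zero.mp e10 with h | h
      · exact absurd h (ne_of_gt hπ)
      · exact h
    have ha01 : C * z 0 1 + D * z 1 1 = 0 := by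
      rcases mul_eq_zero.mp e01 with h | h
      · exact absurd h (ne_of_gt hπ)
      · exact h
    have ha11 : D * z 0 1 + C * z 1 1 = 0 := by
      rcases mul_eq_zero.mp e11 with h | h
      · exact absurd h (ne_of_gt hπ)
      · exact h
    -- solve the (x1,y1) block
    have hABsum : A + B = -(8*μ^2/((1+μ^2)*(1-μ^2)^2)) := by
      rw [hA, hB]; field_simp; ring
    have hABsum_ne : A + B ≠ 0 := by
      rw [hABsum]
      have : 0 < 8*μ^2/((1+μ^2)*(1-μ^2)^2) :=
        div_pos (by positivity) (mul_pos h1p (pow_pos hmpos 2))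
      linarith
    have hABdiff : A - B = -(((1-μ^2)^2*(1+μ^2)^2 + 2*μ^2*(1-μ^2)^3
        + 2*μ^2*(1-μ^2)*(1+μ^2)^2 + 4*μ^4*(1+μ^2)^2) / (μ^2*(1+μ^2)^2*(1-μ^2)^2)) := by
      rw [hA, hB]; field_simp; ring
    have hABdiff_ne : A - B ≠ 0 := by
      rw [hABdiff]
      have hnum : 0 < (1-μ^2)^2*(1+μ^2)^2 + 2*μ^2*(1-μ^2)^3
          + 2*μ^2*(1-μ^2)*(1+μ^2)^2 + 4*μ^4*(1+μ^2)^2 := by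
        have t1 : 0 < (1-μ^2)^2*(1+μ^2)^2 := mul_pos (pow_pos hmpos 2) (pow_pos h1p 2)
        have t2 : 0 < μ^2*(1-μ^2)^3 := mul_pos hμsq (pow_pos hmpos 3)
        have t3 : 0 < μ^2*((1-μ^2)*(1+μ^2)^2) := mul_pos hμsq (mul_pos hmpos (pow_pos h1p 2))
        have t4 : 0 < μ^4*(1+μ^2)^2 := mul_pos (by positivity) (pow_pos h1p 2)
        nlinarith [t1, t2, t3, t4]
      have : 0 < ((1-μ^2)^2*(1+μ^2)^2 + 2*μ^2*(1-μ^2)^3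
          + 2*μ^2*(1-μ^2)*(1+μ^2)^2 + 4*μ^4*(1+μ^2)^2) / (μ^2*(1+μ^2)^2*(1-μ^2)^2) :=
        div_pos hnum (by exact mul_pos (mul_pos hμsq (pow_pos h1p 2)) (pow_pos hmpos 2))
      linarith
    have hzsum : (A + B) * (z 0 0 + z 1 0) = 0 := by linear_combination ha00 + ha10
    have hzdiff : (A - B) * (z 0 0 - z 1 0) = 0 := by linear_combination ha00 - ha10
    have hz00sum : z 0 0 + z 1 0 = 0 := by
      rcases mul_eq_zero.mp hzsum with h | h
      · exact absurd h hABsum_ne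
      · exact h
    have hz00diff : z 0 0 - z 1 0 = 0 := by
      rcases mul_eq_zero.mp hzdiff with h | h
      · exact absurd h hABdiff_ne
      · exact h
    have hz00 : z 0 0 = 0 := by linarith
    have hz10 : z 1 0 = 0 := by linarith
    -- solve the (x2,y2) block
    have hCDsum : C + D = -(8*μ^2/((1+μ^2)^2*(1-μ^2))) := by
      rw [hC, hD]; field_simp; ring
    have hCDsum_ne : C + D ≠ 0 := by
      rw [hCDsum]
      have : 0 < 8*μ^2/((1+μ^2)^2*(1-μ^2)) :=
        div_pos (by positivity) (mul_pos (pow_pos h1p 2) hmpos)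
      linarith
    have hz13sum : (C + D) * (z 0 1 + z 1 1) = 0 := by linear_combination ha01 + ha11
    have hz13 : z 0 1 + z 1 1 = 0 := by
      rcases mul_eq_zero.mp hz13sum with h | h
      · exact absurd h hCDsum_ne
      · exact h
    -- conclude membership in the span
    rw [Submodule.mem_span_singleton]
    refine ⟨-(z 0 1)/μ, ?_⟩
    funext k
    fin_cases k
    · ext j
      fin_cases j
      · show -(z 0 1)/μ * (0:ℝ) = z 0 0
        rw [hz00]; ring
      · show -(z 0 1)/μ * (-μ) = z 0 1
        field_simp
    · ext j
      fin_cases j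
      · show -(z 0 1)/μ * (0:ℝ) = z 1 0
        rw [hz10]; ring
      · show -(z 0 1)/μ * μ = z 1 1
        rw [div_mul_cancel₀ _ hμ]
        linarith
  · intro hz
    rw [Submodule.mem_span_singleton] at hz
    obtain ⟨c, rfl⟩ := hz
    rw [hess_alpha μ hμ hm]
    rw [map_smul, ContinuousLinearMap.coe_coe, vKer μ hμ hm hμ4]
    simp

end KER
section FINAL

lemma pgrad_zero (μ : ℝ) (hμ : μ ≠ 0) (hm : (1:ℝ) - μ^2 ≠ 0) (hμ4 : μ^4 = 1 - 4*μ^2) :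
    ∀ k, pgrad discHamV (![vec μ 0, vec (-μ) 0] : EE) k = 0 := by
  intro k
  rw [pgrad, show discHamV = Ffun from discHamV_eq]
  have hFa : HasFDerivAt Ffun (Gfun (![vec μ 0, vec (-μ) 0] : EE))
      (Function.update (![vec μ 0, vec (-μ) 0] : EE) k ((![vec μ 0, vec (-μ) 0] : EE) k)) := by
    rw [Function.update_eq_self]
    refine hasF _ ?_ ?_ ?_ ?_
    · rw [fS_a]; positivity
    · rw [fQ_a]; positivity
    · rw [fU_a]; exact hm
    · rw [fV_a]; exact hm
  have hcomp := hFa.comp ((![vec μ 0, vec (-μ) 0] : EE) k)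
    (hasFDerivAt_update (![vec μ 0, vec (-μ) 0] : EE) ((![vec μ 0, vec (-μ) 0] : EE) k))
  rw [Gzero μ hμ hm hμ4, ContinuousLinearMap.zero_comp] at hcomp
  have hfd : fderiv ℝ (fun p => Ffun (Function.update (![vec μ 0, vec (-μ) 0] : EE) k p))
      ((![vec μ 0, vec (-μ) 0] : EE) k) = 0 := hcomp.fderiv
  rw [gradient, hfd]
  simp

lemma Jrot_eq (μ : ℝ) :
    (fun k => Jrot ((![vec μ 0, vec (-μ) 0] : EE) k)) = ![vec 0 (-μ), vec 0 μ] := by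
  funext k
  fin_cases k
  · show Jrot (vec μ 0) = vec 0 (-μ)
    ext j
    fin_cases j
    · simp [Jrot, vec, WithLp.equiv_symm_apply, PiLp.toLp_apply]
    · simp [Jrot, vec, WithLp.equiv_symm_apply, PiLp.toLp_apply]
  · show Jrot (vec (-μ) 0) = vec 0 μ
    ext j
    fin_cases j
    · simp [Jrot, vec, WithLp.equiv_symm_apply, PiLp.toLp_apply]
    · simp [Jrot, vec, WithLp.equiv_symm_apply, PiLp.toLp_apply]

lemma rotate_inner (θ : ℝ) (x y : R2) : (inner ℝ (rotate θ x) (rotate θ y) : ℝ) = inner ℝ x y := by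
  simp only [rotate, PiLp.inner_apply, Fin.sum_univ_two, WithLp.equiv_symm_apply, PiLp.toLp_apply,
    RCLike.inner_apply, conj_trivial, Matrix.cons_val_zero, Matrix.cons_val_one, Matrix.head_cons]
  linear_combination (x 0 * y 0 + x 1 * y 1) * Real.sin_sq_add_cos_sq θ

lemma rotate_normsq (θ : ℝ) (x : R2) : ‖rotate θ x‖^2 = ‖x‖^2 := by
  rw [← real_inner_self_eq_norm_sq, ← real_inner_self_eq_norm_sq]
  exact rotate_inner θ x x

lemma rotate_norm (θ : ℝ) (x : R2) : ‖rotate θ x‖ = ‖x‖ := by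
  have h := congrArg Real.sqrt (rotate_normsq θ x)
  rwa [Real.sqrt_sq (norm_nonneg _), Real.sqrt_sq (norm_nonneg _)] at h

lemma rotate_rotate (θ : ℝ) (x : R2) : rotate θ (rotate (-θ) x) = x := by
  ext j
  fin_cases j
  · show Real.cos θ * (rotate (-θ) x 0) + Real.sin θ * (rotate (-θ) x 1) = x 0
    simp only [rotate, WithLp.equiv_symm_apply, PiLp.toLp_apply, Matrix.cons_val_zero, Matrix.cons_val_one,
      Matrix.head_cons, Real.cos_neg, Real.sin_neg]
    linear_combination (x 0) * Real.sin_sq_add_cos_sq θ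
  · show -Real.sin θ * (rotate (-θ) x 0) + Real.cos θ * (rotate (-θ) x 1) = x 1
    simp only [rotate, WithLp.equiv_symm_apply, PiLp.toLp_apply, Matrix.cons_val_zero, Matrix.cons_val_one,
      Matrix.head_cons, Real.cos_neg, Real.sin_neg]
    linear_combination (x 1) * Real.sin_sq_add_cos_sq θ

lemma rot_ball (θ : ℝ) : rotate θ '' Metric.ball (0 : R2) 1 = Metric.ball (0 : R2) 1 := by
  ext y
  simp only [Set.mem_image, Metric.mem_ball, dist_zero_right]
  constructor
  · rintro ⟨x, hx, rfl⟩
    rwa [rotate_norm]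
  · intro hy
    exact ⟨rotate (-θ) y, by rwa [rotate_norm], rotate_rotate θ y⟩

lemma discg_rot (θ : ℝ) (x y : R2) : discg (rotate θ x) (rotate θ y) = discg x y := by
  rw [discg, discg, rotate_norm, rotate_norm, rotate_inner]

end FINAL
set_option maxHeartbeats 1000000 in
/-- for `μ = √(√5-2)`, `α = ((μ,0),(-μ,0))` is a critical point of the
disc Hamiltonian whose Hessian has exactly the one-dimensional kernel `ℝ·J₂α`; the disc
and `g` are rotationally invariant. -/
theorem statement16 (μ : ℝ) (hμ : μ = Real.sqrt (Real.sqrt 5 - 2))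
    (α : Fin 2 → R2) (hα : α = ![vec μ 0, vec (-μ) 0]) :
    (∀ k, pgrad discHamV α k = 0) ∧
    hessKer discHamV α = Submodule.span ℝ {fun k => Jrot (α k)} ∧
    (fun k => Jrot (α k)) = ![vec 0 (-μ), vec 0 μ] ∧
    Module.finrank ℝ (hessKer discHamV α) = 1 ∧
    (∀ θ : ℝ, rotate θ '' Metric.ball (0 : R2) 1 = Metric.ball (0 : R2) 1) ∧
    (∀ (θ : ℝ) (x y : R2), discg (rotate θ x) (rotate θ y) = discg x y) := by
  have h5 : Real.sqrt 5 ^ 2 = 5 := Real.sq_sqrt (by norm_num)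
  have h5nn := Real.sqrt_nonneg 5
  have hrlb : 2.23 < Real.sqrt 5 := by nlinarith
  have hrub : Real.sqrt 5 < 2.24 := by nlinarith
  have ht : μ^2 = Real.sqrt 5 - 2 := by rw [hμ]; exact Real.sq_sqrt (by nlinarith)
  have hμ0 : 0 < μ := by rw [hμ]; exact Real.sqrt_pos.mpr (by nlinarith)
  have hμne : μ ≠ 0 := ne_of_gt hμ0
  have h23 : (0.23:ℝ) < μ^2 := by rw [ht]; linarith
  have h24 : μ^2 < (0.24:ℝ) := by rw [ht]; linarith
  have hμ4 : μ^4 = 1 - 4*μ^2 := by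
    have h : μ^4 = (μ^2)^2 := by ring
    rw [h, ht]; nlinarith
  have hm : (1:ℝ) - μ^2 ≠ 0 := ne_of_gt (by nlinarith)
  subst hα
  have hJ : (fun k => Jrot ((![vec μ 0, vec (-μ) 0] : EE) k)) = ![vec 0 (-μ), vec 0 μ] :=
    Jrot_eq μ
  have hker : hessKer discHamV (![vec μ 0, vec (-μ) 0] : EE)
      = Submodule.span ℝ {(![vec 0 (-μ), vec 0 μ] : EE)} := by
    rw [hessKer, show discHamV = Ffun from discHamV_eq]
    exact ker_eq μ hμ0 h23 h24 hμ4
  have hvne : (![vec 0 (-μ), vec 0 μ] : EE) ≠ 0 := by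
    intro h
    have h2 := congrArg (fun v : R2 => v 1) (congrFun h 0)
    have h3 : -μ = 0 := by simpa [vec, WithLp.equiv_symm_apply, PiLp.toLp_apply] using h2
    exact hμne (by linarith)
  refine ⟨pgrad_zero μ hμne hm hμ4, ?_, hJ, ?_, rot_ball, discg_rot⟩
  · rw [hker, hJ]
  · rw [hker]
    exact finrank_span_singleton hvne
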